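/- Taylor-correction operator accuracy: for φ ∈ C⁴ compactly supported in Ω, define (Q_hφ)_j := φ_j + (h/2)∂φ_j/∂x_j + (h²/12)∂²φ_j/∂x_j². If ∇·φ = 0, then there exists a constant β > 0 (depending on φ) such that the discrete backward divergence of Q_hφ evaluated at any grid point x ∈ Ω_h satisfies |𝒟·(Q_hφ)(x)| ≤ β h³. -/

import Mathlib

open Set

/-- If `G k` is a chain of derivatives, iterated derivatives within `Icc a b`
agree with `G k` on the interval. -/
lemma eqOn_iteratedDerivWithin_chain {G : ℕ → ℝ → ℝ} {N : ℕ}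
    (hd : ∀ k < N, ∀ t : ℝ, HasDerivAt (G k) (G (k+1) t) t)
    {a b : ℝ} (hab : a < b) :
    ∀ k, k ≤ N → ∀ x ∈ Set.Icc a b,
      iteratedDerivWithin k (G 0) (Set.Icc a b) x = G k x := by
  intro k
  induction k with
  | zero => intro _ x hx; simp
  | succ k ih =>
    intro hk x hx
    have hk' : k ≤ N := by omega
    have hkN : k < N := by omega
    rw [iteratedDerivWithin_succ]
    rw [derivWithin_congr (fun z hz => ih hk' z hz) (ih hk' x hx)]
    exact ((hd k hkN x).hasDerivWithinAt).derivWithin ((uniqueDiffOn_Icc hab) x hx)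

/-- One-dimensional Taylor estimate for the corrected backward difference. -/
lemma taylor_backward_est {G : ℕ → ℝ → ℝ}
    (hd : ∀ k < 4, ∀ t : ℝ, HasDerivAt (G k) (G (k+1) t) t)
    {M : ℝ} (hM : ∀ t, |G 4 t| ≤ M) {h : ℝ} (hh : 0 < h) :
    |(G 0 0 - G 0 (-h)) / h + (1/2) * (G 1 0 - G 1 (-h))
      + (h/12) * (G 2 0 - G 2 (-h)) - G 1 0| ≤ M / 6 * h ^ 3 := by
  have hab : (-h) < 0 := by linarith
  have hmem : (-h) ∈ Set.Icc (-h) (0:ℝ) := by constructor <;> linarith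
  have hdiffble : ∀ k < 4, Differentiable ℝ (G k) :=
    fun k hk t => (hd k hk t).differentiableAt
  have hderiv : ∀ k < 4, deriv (G k) = G (k+1) :=
    fun k hk => funext fun t => (hd k hk t).deriv
  -- smoothness of the truncations
  have c3 : ContDiff ℝ 0 (G 3) := contDiff_zero.mpr (hdiffble 3 (by norm_num)).continuous
  have c2 : ContDiff ℝ 1 (G 2) := by
    rw [show (1 : WithTop ℕ∞) = 0 + 1 from rfl, contDiff_succ_iff_deriv]
    refine ⟨hdiffble 2 (by norm_num), by simp, ?_⟩
    rw [hderiv 2 (by norm_num)]; exact c3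
  have c1 : ContDiff ℝ 2 (G 1) := by
    rw [show (2 : WithTop ℕ∞) = 1 + 1 from rfl, contDiff_succ_iff_deriv]
    refine ⟨hdiffble 1 (by norm_num), by simp, ?_⟩
    rw [hderiv 1 (by norm_num)]; exact c2
  have c0 : ContDiff ℝ 3 (G 0) := by
    rw [show (3 : WithTop ℕ∞) = 2 + 1 from rfl, contDiff_succ_iff_deriv]
    refine ⟨hdiffble 0 (by norm_num), by simp, ?_⟩
    rw [hderiv 0 (by norm_num)]; exact c1
  -- the three Taylor expansions around -h
  have eq0 := eqOn_iteratedDerivWithin_chain (N := 4) hd hab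
  have eq1 := eqOn_iteratedDerivWithin_chain (G := fun k => G (k+1)) (N := 3)
    (fun k hk => hd (k+1) (by omega)) hab
  have eq2 := eqOn_iteratedDerivWithin_chain (G := fun k => G (k+2)) (N := 2)
    (fun k hk => hd (k+2) (by omega)) hab
  obtain ⟨ξ₁, hξ₁, H1⟩ := taylor_mean_remainder_lagrange (n := 3) hab.ne c0.contDiffOn
    (by rw [uIcc_of_le hab.le, uIoo_of_lt hab]; exact (((hdiffble 3 (by norm_num)).differentiableOn).congr
      (fun z hz => eq0 3 (by norm_num) z (Ioo_subset_Icc_self hz))))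
  obtain ⟨ξ₂, hξ₂, H2⟩ := taylor_mean_remainder_lagrange (n := 2) hab.ne c1.contDiffOn
    (by rw [uIcc_of_le hab.le, uIoo_of_lt hab]; exact (((hdiffble 3 (by norm_num)).differentiableOn).congr
      (fun z hz => eq1 2 (by norm_num) z (Ioo_subset_Icc_self hz))))
  obtain ⟨ξ₃, hξ₃, H3⟩ := taylor_mean_remainder_lagrange (n := 1) hab.ne c2.contDiffOn
    (by rw [uIcc_of_le hab.le, uIoo_of_lt hab]; exact (((hdiffble 3 (by norm_num)).differentiableOn).congr
      (fun z hz => eq2 1 (by norm_num) z (Ioo_subset_Icc_self hz))))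
  rw [uIcc_of_le hab.le] at H1 H2 H3
  rw [uIoo_of_lt hab] at hξ₁ hξ₂ hξ₃
  rw [taylor_within_apply] at H1 H2 H3
  rw [eq0 4 le_rfl ξ₁ (Ioo_subset_Icc_self hξ₁)] at H1
  rw [eq1 3 le_rfl ξ₂ (Ioo_subset_Icc_self hξ₂)] at H2
  rw [eq2 2 le_rfl ξ₃ (Ioo_subset_Icc_self hξ₃)] at H3
  simp only [Finset.sum_range_succ, Finset.sum_range_zero] at H1 H2 H3
  rw [eq0 0 (by norm_num) _ hmem, eq0 1 (by norm_num) _ hmem,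
      eq0 2 (by norm_num) _ hmem, eq0 3 (by norm_num) _ hmem] at H1
  rw [eq1 0 (by norm_num) _ hmem, eq1 1 (by norm_num) _ hmem,
      eq1 2 (by norm_num) _ hmem] at H2
  rw [eq2 0 (by norm_num) _ hmem, eq2 1 (by norm_num) _ hmem] at H3
  simp only [smul_eq_mul] at H1 H2 H3
  set r1 := G 4 ξ₁
  set r2 := G 4 ξ₂
  set r3 := G 4 ξ₃
  have hne : h ≠ 0 := ne_of_gt hh
  have key : (G 0 0 - G 0 (-h)) / h + (1/2) * (G 1 0 - G 1 (-h))
      + (h/12) * (G 2 0 - G 2 (-h)) - G 1 0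
      = h ^ 3 * (r1 / 24 - r2 / 12 + r3 / 24) := by
    have e1 : G 0 0 = G 0 (-h) + h * G 1 (-h) + h^2/2 * G 2 (-h)
        + h^3/6 * G 3 (-h) + r1 * h^4/24 := by
      have := H1
      norm_num [Nat.factorial] at this ⊢
      linarith
    have e2 : G 1 0 = G 1 (-h) + h * G 2 (-h) + h^2/2 * G 3 (-h) + r2 * h^3/6 := by
      have := H2
      norm_num [Nat.factorial] at this ⊢
      linarith
    have e3 : G 2 0 = G 2 (-h) + h * G 3 (-h) + r3 * h^2/2 := by
      have := H3
      norm_num [Nat.factorial] at this ⊢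
      linarith
    rw [e1, e2, e3]
    field_simp
    ring
  rw [key, abs_mul, abs_of_nonneg (by positivity : (0:ℝ) ≤ h ^ 3), mul_comm]
  have : |r1 / 24 - r2 / 12 + r3 / 24| ≤ M / 6 := by
    have b1 := abs_le.mp (hM ξ₁)
    have b2 := abs_le.mp (hM ξ₂)
    have b3 := abs_le.mp (hM ξ₃)
    rw [abs_le]
    constructor <;> [linarith [b1.1, b2.2, b3.1]; linarith [b1.2, b2.1, b3.2]]
  exact mul_le_mul_of_nonneg_right this (by positivity)
/-- Iterated directional derivatives `∂_j^k φ_j`. -/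
noncomputable def psi (φ : (Fin 3 → ℝ) → Fin 3 → ℝ) (j : Fin 3) :
    ℕ → (Fin 3 → ℝ) → ℝ
  | 0 => fun z => φ z j
  | k+1 => fun z => fderiv ℝ (psi φ j k) z (Pi.single j 1)

lemma psi_contDiff {φ : (Fin 3 → ℝ) → Fin 3 → ℝ} (hφ : ContDiff ℝ 4 φ)
    (j : Fin 3) : ∀ k n : ℕ, k + n ≤ 4 → ContDiff ℝ n (psi φ j k) := by
  intro k
  induction k with
  | zero =>
    intro n hn
    exact ((ContinuousLinearMap.proj (R := ℝ) (φ := fun _ : Fin 3 => ℝ) j).contDiff).comp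
      (hφ.of_le (by exact_mod_cast (by omega : n ≤ 4)))
  | succ k ih =>
    intro n hn
    have h1 : ContDiff ℝ (n+1) (psi φ j k) := ih (n+1) (by omega)
    have h2 : ContDiff ℝ n (fun z => fderiv ℝ (psi φ j k) z) :=
      h1.fderiv_right (by exact_mod_cast le_rfl)
    exact h2.clm_apply contDiff_const

lemma psi_compactSupport {φ : (Fin 3 → ℝ) → Fin 3 → ℝ}
    (hsupp : HasCompactSupport φ) (j : Fin 3) :
    ∀ k, HasCompactSupport (psi φ j k) := by
  intro k
  induction k with
  | zero => exact hsupp.comp_left (g := fun w : Fin 3 → ℝ => w j) rfl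
  | succ k ih => exact ih.fderiv_apply ℝ (Pi.single j 1)

lemma hasDerivAt_psi_line {φ : (Fin 3 → ℝ) → Fin 3 → ℝ} (hφ : ContDiff ℝ 4 φ)
    (j : Fin 3) (y : Fin 3 → ℝ) :
    ∀ k < 4, ∀ t : ℝ,
      HasDerivAt (fun t => psi φ j k (y + t • (Pi.single j 1 : Fin 3 → ℝ)))
        (psi φ j (k+1) (y + t • (Pi.single j 1 : Fin 3 → ℝ))) t := by
  intro k hk t
  have hdiff : DifferentiableAt ℝ (psi φ j k) (y + t • (Pi.single j 1 : Fin 3 → ℝ)) :=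
    (psi_contDiff hφ j k 1 (by omega)).differentiable (by norm_num) _
  have hline : HasDerivAt (fun t : ℝ => y + t • (Pi.single j 1 : Fin 3 → ℝ))
      ((Pi.single j 1 : Fin 3 → ℝ)) t := by
    simpa using (((hasDerivAt_id t).smul_const ((Pi.single j 1 : Fin 3 → ℝ))).const_add y)
  have := hdiff.hasFDerivAt.comp_hasDerivAt t hline
  simp only [psi]; exact this


open Finset

/-- The Taylor-correction operator
`(Q_hφ)_j = φ_j + (h/2)∂_jφ_j + (h²/12)∂_j²φ_j`. -/
noncomputable def Qh (h : ℝ) (φ : (Fin 3 → ℝ) → Fin 3 → ℝ)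
    (y : Fin 3 → ℝ) : Fin 3 → ℝ :=
  fun j =>
    φ y j + (h / 2) * fderiv ℝ (fun z => φ z j) y (Pi.single j 1)
      + (h ^ 2 / 12) *
          fderiv ℝ (fun z => fderiv ℝ (fun w => φ w j) z (Pi.single j 1)) y
            (Pi.single j 1)

/-- for a `C⁴` compactly supported divergence-free `φ`, the
discrete backward divergence of `Q_hφ` is `O(h³)` at every grid point,
uniformly in `h`. -/
theorem Qh_discrete_divergence_accuracy
    (φ : (Fin 3 → ℝ) → Fin 3 → ℝ)
    (hφ : ContDiff ℝ 4 φ) (hsupp : HasCompactSupport φ)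
    (hdiv : ∀ y, ∑ j, fderiv ℝ (fun z => φ z j) y (Pi.single j 1) = 0) :
    ∃ β > (0 : ℝ), ∀ h : ℝ, 0 < h → ∀ x : Fin 3 → ℤ,
      |∑ j, (Qh h φ (fun i => h * (x i : ℝ)) j
          - Qh h φ ((fun i => h * (x i : ℝ)) - h • (Pi.single j (1:ℝ) : Fin 3 → ℝ)) j) / h|
        ≤ β * h ^ 3 := by
  have hb : ∀ j : Fin 3, ∃ M : ℝ, ∀ z, |psi φ j 4 z| ≤ M := by
    intro j
    obtain ⟨C, hC⟩ := (psi_compactSupport hsupp j 4).exists_bound_of_continuous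
      ((psi_contDiff hφ j 4 0 (by norm_num)).continuous)
    exact ⟨C, fun z => by simpa [Real.norm_eq_abs] using hC z⟩
  choose M hM using hb
  have hMnn : ∀ j, 0 ≤ M j := fun j => le_trans (abs_nonneg _) (hM j 0)
  have hsnn : 0 ≤ ∑ j, M j := Finset.sum_nonneg (fun j _ => hMnn j)
  refine ⟨(∑ j, M j) / 6 + 1, by positivity, ?_⟩
  intro h hh x
  set y : Fin 3 → ℝ := fun i => h * (x i : ℝ) with hy
  have key : ∀ j : Fin 3,
      |(Qh h φ y j - Qh h φ (y - h • (Pi.single j 1 : Fin 3 → ℝ)) j) / h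
        - fderiv ℝ (fun z => φ z j) y (Pi.single j 1)| ≤ M j / 6 * h ^ 3 := by
    intro j
    have hd := hasDerivAt_psi_line hφ j y
    have est := taylor_backward_est
      (G := fun k t => psi φ j k (y + t • (Pi.single j 1 : Fin 3 → ℝ)))
      hd (fun t => hM j _) hh
    have hG0 : ∀ k, psi φ j k (y + (0:ℝ) • (Pi.single j 1 : Fin 3 → ℝ)) = psi φ j k y := by
      intro k; norm_num
    have hGh : ∀ k, psi φ j k (y + (-h) • (Pi.single j 1 : Fin 3 → ℝ))
        = psi φ j k (y - h • (Pi.single j 1 : Fin 3 → ℝ)) := by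
      intro k; congr 1; module
    simp only [hG0, hGh] at est
    have hQ : ∀ z, Qh h φ z j
        = psi φ j 0 z + (h/2) * psi φ j 1 z + (h^2/12) * psi φ j 2 z := by
      intro z; simp [Qh, psi]
    have hf1 : fderiv ℝ (fun z => φ z j) y (Pi.single j 1) = psi φ j 1 y := by
      simp [psi]
    have hne : h ≠ 0 := ne_of_gt hh
    have hrw : (Qh h φ y j - Qh h φ (y - h • (Pi.single j 1 : Fin 3 → ℝ)) j) / h
        - fderiv ℝ (fun z => φ z j) y (Pi.single j 1)
        = (psi φ j 0 y - psi φ j 0 (y - h • (Pi.single j 1 : Fin 3 → ℝ))) / h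
          + (1/2) * (psi φ j 1 y - psi φ j 1 (y - h • (Pi.single j 1 : Fin 3 → ℝ)))
          + (h/12) * (psi φ j 2 y - psi φ j 2 (y - h • (Pi.single j 1 : Fin 3 → ℝ)))
          - psi φ j 1 y := by
      rw [hQ, hQ, hf1]
      field_simp
      ring
    rw [hrw]
    exact est
  have hdivy := hdiv y
  calc |∑ j, (Qh h φ y j - Qh h φ (y - h • (Pi.single j 1 : Fin 3 → ℝ)) j) / h|
      = |∑ j, ((Qh h φ y j - Qh h φ (y - h • (Pi.single j 1 : Fin 3 → ℝ)) j) / h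
          - fderiv ℝ (fun z => φ z j) y (Pi.single j 1))| := by
        rw [Finset.sum_sub_distrib, hdivy, sub_zero]
    _ ≤ ∑ j, |(Qh h φ y j - Qh h φ (y - h • (Pi.single j 1 : Fin 3 → ℝ)) j) / h
          - fderiv ℝ (fun z => φ z j) y (Pi.single j 1)| :=
        Finset.abs_sum_le_sum_abs _ _
    _ ≤ ∑ j, M j / 6 * h ^ 3 := Finset.sum_le_sum (fun j _ => key j)
    _ ≤ ((∑ j, M j) / 6 + 1) * h ^ 3 := by
        rw [← Finset.sum_mul, ← Finset.sum_div]
        nlinarith [pow_pos hh 3]
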